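/- Let ρ₀ > 0 and internal energy e₀ = E₀ − |m₀|²/(2ρ₀) > 0 a.e. on a cell K, and suppose the entropy s₀ = (1/(γ−1)) log((γ−1) ρ₀^{−γ} (E₀ − |m₀|²/(2ρ₀)) · ρ₀^{γ−1}) satisfies s₀ ≥ s̲ a.e. on K for some constant s̲. Then the entropy evaluated at the cell averages also satisfies s(⟨ρ₀⟩_K, ⟨m₀⟩_K, ⟨E₀⟩_K) ≥ s̲, where ⟨·⟩_K denotes the mean over K. -/

import Mathlib

open MeasureTheory Set

/-- The physical entropy `s(ρ,m,E) = (1/(γ−1)) log((γ−1)(E − |m|²/(2ρ))/ρ^γ)`. -/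
noncomputable def entropy {d : ℕ} (γ : ℝ) (ρ : ℝ) (m : EuclideanSpace ℝ (Fin d)) (E : ℝ) : ℝ :=
  (1 / (γ - 1)) * Real.log ((γ - 1) * (E - ‖m‖ ^ 2 / (2 * ρ)) / ρ ^ γ)

section helpers

variable {α : Type*} [MeasurableSpace α] {μ : Measure α}

lemma avg_mono' {f g : α → ℝ} (hf : Integrable f μ) (hg : Integrable g μ)
    (h : f ≤ᵐ[μ] g) : ⨍ x, f x ∂μ ≤ ⨍ x, g x ∂μ := by
  rw [average_eq, average_eq, smul_eq_mul, smul_eq_mul]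
  exact mul_le_mul_of_nonneg_left (integral_mono_ae hf hg h)
    (inv_nonneg.2 ENNReal.toReal_nonneg)

lemma avg_const_mul {f : α → ℝ} (c : ℝ) :
    ⨍ x, c * f x ∂μ = c * ⨍ x, f x ∂μ := by
  rw [average_eq, average_eq, smul_eq_mul, smul_eq_mul, integral_const_mul]
  ring

lemma avg_sub {f g : α → ℝ} (hf : Integrable f μ) (hg : Integrable g μ) :
    ⨍ x, (f x - g x) ∂μ = (⨍ x, f x ∂μ) - ⨍ x, g x ∂μ := by
  rw [average_eq, average_eq, average_eq, smul_eq_mul, smul_eq_mul, smul_eq_mul,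
    integral_sub hf hg]
  ring

end helpers

/-- The minimal entropy principle survives cell averaging: if `s(ρ₀,m₀,E₀) ≥ sLow` a.e. on a
cell `K`, then the entropy of the cell averages is also `≥ sLow`. -/
theorem stmt9 {d : ℕ} (γ : ℝ) (hγ : 1 < γ) (sLow : ℝ)
    (K : Set (EuclideanSpace ℝ (Fin d)))
    (hKmeas : MeasurableSet K) (hKpos : 0 < volume K) (hKfin : volume K < ⊤)
    (ρ₀ E₀ : EuclideanSpace ℝ (Fin d) → ℝ)
    (m₀ : EuclideanSpace ℝ (Fin d) → EuclideanSpace ℝ (Fin d))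
    (hρint : IntegrableOn ρ₀ K) (hmint : IntegrableOn m₀ K) (hEint : IntegrableOn E₀ K)
    (hργint : IntegrableOn (fun x => ρ₀ x ^ γ) K)
    (hkin : IntegrableOn (fun x => ‖m₀ x‖ ^ 2 / (2 * ρ₀ x)) K)
    (hρpos : ∀ᵐ x ∂volume.restrict K, 0 < ρ₀ x)
    (hepos : ∀ᵐ x ∂volume.restrict K, 0 < E₀ x - ‖m₀ x‖ ^ 2 / (2 * ρ₀ x))
    (hent : ∀ᵐ x ∂volume.restrict K, sLow ≤ entropy γ (ρ₀ x) (m₀ x) (E₀ x)) :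
    sLow ≤ entropy γ (⨍ x in K, ρ₀ x ∂volume) (⨍ x in K, m₀ x ∂volume)
      (⨍ x in K, E₀ x ∂volume) := by
  have hγ1 : (0:ℝ) < γ - 1 := by linarith
  set μ := volume.restrict K with hμdef
  haveI hfinμ : IsFiniteMeasure μ := ⟨by rwa [Measure.restrict_apply_univ]⟩
  haveI : NeZero μ := ⟨by
    intro h
    have : μ univ = 0 := by rw [h]; rfl
    rw [Measure.restrict_apply_univ] at this
    exact hKpos.ne' this⟩
  set c := Real.exp ((γ - 1) * sLow) with hc
  have hcpos : 0 < c := Real.exp_pos _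
  -- pointwise consequence of the entropy bound
  have hpt : ∀ᵐ x ∂μ, c * ρ₀ x ^ γ ≤ (γ - 1) * (E₀ x - ‖m₀ x‖ ^ 2 / (2 * ρ₀ x)) := by
    filter_upwards [hρpos, hepos, hent] with x hρ he hs
    have hργpos : 0 < ρ₀ x ^ γ := Real.rpow_pos_of_pos hρ γ
    have hApos : 0 < (γ - 1) * (E₀ x - ‖m₀ x‖ ^ 2 / (2 * ρ₀ x)) / ρ₀ x ^ γ := by positivity
    have hlog : (γ - 1) * sLow ≤
        Real.log ((γ - 1) * (E₀ x - ‖m₀ x‖ ^ 2 / (2 * ρ₀ x)) / ρ₀ x ^ γ) := by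
      have h1 := mul_le_mul_of_nonneg_left hs hγ1.le
      unfold entropy at h1
      have h2 : (γ - 1) * (1 / (γ - 1) *
          Real.log ((γ - 1) * (E₀ x - ‖m₀ x‖ ^ 2 / (2 * ρ₀ x)) / ρ₀ x ^ γ)) =
          Real.log ((γ - 1) * (E₀ x - ‖m₀ x‖ ^ 2 / (2 * ρ₀ x)) / ρ₀ x ^ γ) := by
        field_simp
      linarith
    have : c ≤ (γ - 1) * (E₀ x - ‖m₀ x‖ ^ 2 / (2 * ρ₀ x)) / ρ₀ x ^ γ := by
      calc c = Real.exp ((γ - 1) * sLow) := rfl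
        _ ≤ Real.exp (Real.log ((γ - 1) * (E₀ x - ‖m₀ x‖ ^ 2 / (2 * ρ₀ x)) / ρ₀ x ^ γ)) :=
            Real.exp_le_exp.2 hlog
        _ = _ := Real.exp_log hApos
    calc c * ρ₀ x ^ γ
        ≤ ((γ - 1) * (E₀ x - ‖m₀ x‖ ^ 2 / (2 * ρ₀ x)) / ρ₀ x ^ γ) * ρ₀ x ^ γ :=
          mul_le_mul_of_nonneg_right this hργpos.le
      _ = (γ - 1) * (E₀ x - ‖m₀ x‖ ^ 2 / (2 * ρ₀ x)) := by
            field_simp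
  -- averages
  set ρb := ⨍ x, ρ₀ x ∂μ with hρb
  set mb := ⨍ x, m₀ x ∂μ with hmb
  set Eb := ⨍ x, E₀ x ∂μ with hEb
  -- positivity of the average density
  have hρbpos : 0 < ρb := by
    rw [hρb, average_eq, smul_eq_mul]
    have hIpos : 0 < ∫ x, ρ₀ x ∂μ := by
      rw [integral_pos_iff_support_of_nonneg_ae (hρpos.mono fun x hx => hx.le) hρint]
      have hcomp : μ (Function.support ρ₀)ᶜ = 0 := by
        have h0 := hρpos
        rw [ae_iff] at h0
        refine measure_mono_null ?_ h0
        intro x hx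
        simp only [Function.mem_support, not_not, mem_compl_iff] at hx
        simpa [hx] using hx
      have huniv : 0 < μ univ := by
        rw [Measure.restrict_apply_univ]; exact hKpos
      have hle := measure_univ_le_add_compl (μ := μ) (Function.support ρ₀)
      rw [hcomp, add_zero] at hle
      exact lt_of_lt_of_le huniv hle
    have : 0 < (μ univ).toReal := by
      rw [Measure.restrict_apply_univ]
      exact ENNReal.toReal_pos hKpos.ne' hKfin.ne
    positivity
  -- Jensen's inequality for the convex function `r ↦ r ^ γ`
  have hJensen : ρb ^ γ ≤ ⨍ x, ρ₀ x ^ γ ∂μ := by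
    exact (convexOn_rpow hγ.le).map_average_le
      (Real.continuous_rpow_const (by positivity)).continuousOn isClosed_Ici
      (hρpos.mono fun x hx => le_of_lt hx) hρint hργint
  -- the kinetic energy of the averages is at most the average kinetic energy
  have hkinavg : ‖mb‖ ^ 2 / (2 * ρb) ≤ ⨍ x, ‖m₀ x‖ ^ 2 / (2 * ρ₀ x) ∂μ := by
    set b : EuclideanSpace ℝ (Fin d) := ρb⁻¹ • mb with hbdef
    have hptk : ∀ᵐ x ∂μ, (inner ℝ b (m₀ x) : ℝ) - ρ₀ x * (‖b‖ ^ 2 / 2)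
        ≤ ‖m₀ x‖ ^ 2 / (2 * ρ₀ x) := by
      filter_upwards [hρpos] with x hρ
      have h2 : (0:ℝ) ≤ ‖m₀ x - ρ₀ x • b‖ ^ 2 := sq_nonneg _
      have hexp : ‖m₀ x - ρ₀ x • b‖ ^ 2
          = ‖m₀ x‖ ^ 2 - 2 * (ρ₀ x * (inner ℝ b (m₀ x) : ℝ)) + ρ₀ x ^ 2 * ‖b‖ ^ 2 := by
        rw [norm_sub_sq_real, real_inner_smul_right, real_inner_comm, norm_smul]
        rw [Real.norm_eq_abs, abs_of_pos hρ]
        ring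
      rw [le_div_iff₀ (by positivity)]
      nlinarith
    have hLint : Integrable (fun x => (inner ℝ b (m₀ x) : ℝ) - ρ₀ x * (‖b‖ ^ 2 / 2)) μ :=
      (hmint.const_inner b).sub (hρint.mul_const _)
    have havg := avg_mono' hLint hkin hptk
    have havg_inner : ⨍ x, (inner ℝ b (m₀ x) : ℝ) ∂μ = (inner ℝ b mb : ℝ) := by
      rw [average_eq, smul_eq_mul, integral_inner hmint b, hmb, average_eq,
        real_inner_smul_right]
    have havgL : ⨍ x, ((inner ℝ b (m₀ x) : ℝ) - ρ₀ x * (‖b‖ ^ 2 / 2)) ∂μ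
        = (inner ℝ b mb : ℝ) - ρb * (‖b‖ ^ 2 / 2) := by
      rw [avg_sub (hmint.const_inner b) (hρint.mul_const _), havg_inner]
      congr 1
      have : (fun x => ρ₀ x * (‖b‖ ^ 2 / 2)) = fun x => (‖b‖ ^ 2 / 2) * ρ₀ x := by
        funext x; ring
      rw [show (⨍ x, ρ₀ x * (‖b‖ ^ 2 / 2) ∂μ) = ⨍ x, (‖b‖ ^ 2 / 2) * ρ₀ x ∂μ by
          exact average_congr (Filter.Eventually.of_forall fun x => by ring),
        avg_const_mul]
      ring
    have hval : (inner ℝ b mb : ℝ) - ρb * (‖b‖ ^ 2 / 2) = ‖mb‖ ^ 2 / (2 * ρb) := by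
      rw [hbdef, real_inner_smul_left, real_inner_self_eq_norm_sq, norm_smul,
        Real.norm_eq_abs, abs_of_pos (inv_pos.2 hρbpos)]
      field_simp
      ring
    rw [havgL, hval] at havg
    exact havg
  -- average the pointwise entropy inequality
  have havgpt : c * (⨍ x, ρ₀ x ^ γ ∂μ)
      ≤ (γ - 1) * (Eb - ⨍ x, ‖m₀ x‖ ^ 2 / (2 * ρ₀ x) ∂μ) := by
    have h1 : ⨍ x, c * ρ₀ x ^ γ ∂μ
        ≤ ⨍ x, (γ - 1) * (E₀ x - ‖m₀ x‖ ^ 2 / (2 * ρ₀ x)) ∂μ :=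
      avg_mono' (hργint.const_mul c) ((hEint.sub hkin).const_mul (γ - 1)) hpt
    rwa [avg_const_mul, avg_const_mul, avg_sub hEint hkin, ← hEb] at h1
  -- combine everything
  have hkey : c * ρb ^ γ ≤ (γ - 1) * (Eb - ‖mb‖ ^ 2 / (2 * ρb)) := by
    calc c * ρb ^ γ ≤ c * ⨍ x, ρ₀ x ^ γ ∂μ := mul_le_mul_of_nonneg_left hJensen hcpos.le
      _ ≤ (γ - 1) * (Eb - ⨍ x, ‖m₀ x‖ ^ 2 / (2 * ρ₀ x) ∂μ) := havgpt
      _ ≤ (γ - 1) * (Eb - ‖mb‖ ^ 2 / (2 * ρb)) :=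
          mul_le_mul_of_nonneg_left (by linarith) hγ1.le
  have hρbγ : 0 < ρb ^ γ := Real.rpow_pos_of_pos hρbpos γ
  have hargc : c ≤ (γ - 1) * (Eb - ‖mb‖ ^ 2 / (2 * ρb)) / ρb ^ γ :=
    (le_div_iff₀ hρbγ).2 (by linarith [hkey])
  have hlogc : (γ - 1) * sLow
      ≤ Real.log ((γ - 1) * (Eb - ‖mb‖ ^ 2 / (2 * ρb)) / ρb ^ γ) := by
    calc (γ - 1) * sLow = Real.log c := (Real.log_exp _).symm
      _ ≤ _ := Real.log_le_log hcpos hargc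
  unfold entropy
  have hfinal := mul_le_mul_of_nonneg_left hlogc (by positivity : (0:ℝ) ≤ 1 / (γ - 1))
  calc sLow = (1 / (γ - 1)) * ((γ - 1) * sLow) := by field_simp
    _ ≤ _ := hfinal
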